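/- Let N ≥ 0 and let V be any subspace of Ŝ_N(K) with Ŝ₀(K) ⊆ V, equipped with any norm, with closed unit ball B. Then V is regular: the functions z ↦ (1/t)·log sup_{f∈B} |f(tz)| converge to h_K(z) uniformly on every compact subset of ℂⁿ as t → +∞. In particular, for every N ≥ 0 the space Ŝ_N(K) of quasi-polynomials is regular. -/

import Mathlib

open Filter Topology MeasureTheory

noncomputable def pair {n : ℕ} (ξ z : EuclideanSpace ℂ (Fin n)) : ℂ :=
  ∑ j, ξ j * z j

noncomputable def suppFn {n : ℕ} (K : Finset (EuclideanSpace ℂ (Fin n))) (hK : K.Nonempty)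
    (z : EuclideanSpace ℂ (Fin n)) : ℝ :=
  K.sup' hK fun ξ => (pair ξ z).re

def IsQuasiPolyDeg {n : ℕ} (K : Finset (EuclideanSpace ℂ (Fin n))) (N : ℕ)
    (f : EuclideanSpace ℂ (Fin n) → ℂ) : Prop :=
  ∃ p : EuclideanSpace ℂ (Fin n) → MvPolynomial (Fin n) ℂ,
    (∀ ξ, (p ξ).totalDegree ≤ N) ∧
    ∀ z, f z = ∑ ξ ∈ K, MvPolynomial.eval (fun j => z j) (p ξ) * Complex.exp (pair ξ z)

def IsExpSum {n : ℕ} (K : Finset (EuclideanSpace ℂ (Fin n)))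
    (f : EuclideanSpace ℂ (Fin n) → ℂ) : Prop :=
  ∃ c : EuclideanSpace ℂ (Fin n) → ℂ, ∀ z, f z = ∑ ξ ∈ K, c ξ * Complex.exp (pair ξ z)

def IsRegularFor {n : ℕ} (K : Finset (EuclideanSpace ℂ (Fin n))) (hK : K.Nonempty)
    (B : Set (EuclideanSpace ℂ (Fin n) → ℂ)) : Prop :=
  ∀ S : Set (EuclideanSpace ℂ (Fin n)), IsCompact S →
    TendstoUniformlyOn
      (fun (t : ℝ) z => (1 / t) * Real.log (sSup ((fun f => ‖f (t • z)‖) '' B)))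
      (suppFn K hK) atTop S

def unitBall {n : ℕ} (V : Submodule ℂ (EuclideanSpace ℂ (Fin n) → ℂ)) (nrm : V → ℝ) :
    Set (EuclideanSpace ℂ (Fin n) → ℂ) :=
  {f | ∃ g : V, nrm g ≤ 1 ∧ (g : EuclideanSpace ℂ (Fin n) → ℂ) = f}

def IsNormOn {n : ℕ} (V : Submodule ℂ (EuclideanSpace ℂ (Fin n) → ℂ)) (nrm : V → ℝ) : Prop :=
  (∀ g : V, nrm g = 0 ↔ g = 0) ∧
  (∀ (a : ℂ) (g : V), nrm (a • g) = ‖a‖ * nrm g) ∧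
  (∀ g₁ g₂ : V, nrm (g₁ + g₂) ≤ nrm g₁ + nrm g₂)

def suppFace {n : ℕ} (K : Finset (EuclideanSpace ℂ (Fin n)))
    (x : EuclideanSpace ℂ (Fin n)) : Set (EuclideanSpace ℂ (Fin n)) :=
  {ξ ∈ convexHull ℝ (K : Set (EuclideanSpace ℂ (Fin n))) |
    ∀ η ∈ convexHull ℝ (K : Set (EuclideanSpace ℂ (Fin n))), (pair η x).re ≤ (pair ξ x).re}

namespace Stmt4Aux

variable {n : ℕ}

lemma abs_coord_le (w : EuclideanSpace ℂ (Fin n)) (j : Fin n) : ‖w j‖ ≤ ‖w‖ := by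
  rw [EuclideanSpace.norm_eq, ← Real.sqrt_sq (norm_nonneg (w j))]
  apply Real.sqrt_le_sqrt
  exact Finset.single_le_sum (f := fun i => ‖w i‖ ^ 2) (fun i _ => sq_nonneg _)
    (Finset.mem_univ j)

lemma pair_smul (ξ z : EuclideanSpace ℂ (Fin n)) (t : ℝ) :
    pair ξ (t • z) = (t : ℂ) * pair ξ z := by
  unfold pair
  rw [Finset.mul_sum]
  refine Finset.sum_congr rfl fun j _ => ?_
  have h : (t • z) j = (t : ℂ) * z j := by
    simp [Complex.real_smul]
  rw [h]; ring

lemma pair_zero (ξ : EuclideanSpace ℂ (Fin n)) : pair ξ (0 : EuclideanSpace ℂ (Fin n)) = 0 := by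
  unfold pair
  simp

lemma suppFn_smul (K : Finset (EuclideanSpace ℂ (Fin n))) (hK : K.Nonempty)
    {t : ℝ} (ht : 0 ≤ t) (z : EuclideanSpace ℂ (Fin n)) :
    suppFn K hK (t • z) = t * suppFn K hK z := by
  unfold suppFn
  rw [Finset.comp_sup'_eq_sup'_comp hK (fun r : ℝ => t * r) (fun x y => mul_max_of_nonneg x y ht)]
  refine Finset.sup'_congr hK rfl fun ξ _ => ?_
  rw [pair_smul]
  simp [Complex.re_ofReal_mul]

lemma poly_bound (N : ℕ) (q : MvPolynomial (Fin n) ℂ) (hq : q.totalDegree ≤ N)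
    (w : EuclideanSpace ℂ (Fin n)) :
    ‖MvPolynomial.eval (fun j => w j) q‖
      ≤ (∑ α ∈ q.support, ‖q.coeff α‖) * (1 + ‖w‖) ^ N := by
  have hb : (1 : ℝ) ≤ 1 + ‖w‖ := le_add_of_nonneg_right (norm_nonneg w)
  rw [MvPolynomial.eval_eq', Finset.sum_mul]
  refine (norm_sum_le _ _).trans (Finset.sum_le_sum fun α hα => ?_)
  rw [norm_mul]
  refine mul_le_mul_of_nonneg_left ?_ (norm_nonneg _)
  rw [norm_prod]
  calc ∏ j, ‖w j ^ α j‖ ≤ ∏ j, (1 + ‖w‖) ^ α j := by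
        refine Finset.prod_le_prod (fun _ _ => norm_nonneg _) fun j _ => ?_
        rw [norm_pow]
        exact pow_le_pow_left₀ (norm_nonneg _)
          ((abs_coord_le w j).trans (by linarith)) _
    _ = (1 + ‖w‖) ^ (∑ j, α j) := by rw [Finset.prod_pow_eq_pow_sum]
    _ ≤ (1 + ‖w‖) ^ N := by
        apply pow_le_pow_right₀ hb
        have h1 : (∑ j, α j) = α.sum fun _ e => e :=
          (Finsupp.sum_fintype α (fun _ e => e) fun _ => rfl).symm
        rw [h1]
        exact (MvPolynomial.le_totalDegree hα).trans hq

lemma qp_bound (N : ℕ) (K : Finset (EuclideanSpace ℂ (Fin n))) (hK : K.Nonempty)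
    (f : EuclideanSpace ℂ (Fin n) → ℂ) (hf : IsQuasiPolyDeg K N f) :
    ∃ D : ℝ, 0 ≤ D ∧ ∀ w, ‖f w‖
      ≤ D * (1 + ‖w‖) ^ N * Real.exp (suppFn K hK w) := by
  obtain ⟨p, hdeg, hfp⟩ := hf
  refine ⟨∑ ξ ∈ K, ∑ α ∈ (p ξ).support, ‖(p ξ).coeff α‖, by positivity, fun w => ?_⟩
  rw [hfp w, Finset.sum_mul, Finset.sum_mul]
  refine (norm_sum_le _ _).trans (Finset.sum_le_sum fun ξ hξ => ?_)
  rw [norm_mul, Complex.norm_exp]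
  have h1 := poly_bound N (p ξ) (hdeg ξ) w
  have h2 : Real.exp ((pair ξ w).re) ≤ Real.exp (suppFn K hK w) :=
    Real.exp_le_exp.mpr (Finset.le_sup' (fun ξ => (pair ξ w).re) hξ)
  have h3 : (0:ℝ) ≤ (∑ α ∈ (p ξ).support, ‖(p ξ).coeff α‖) * (1 + ‖w‖) ^ N := by
    positivity
  calc ‖MvPolynomial.eval (fun j => w j) (p ξ)‖ * Real.exp ((pair ξ w).re)
      ≤ ((∑ α ∈ (p ξ).support, ‖(p ξ).coeff α‖) * (1 + ‖w‖) ^ N)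
          * Real.exp (suppFn K hK w) :=
        mul_le_mul h1 h2 (Real.exp_nonneg _) h3
    _ = _ := by ring

lemma log_lin_div {R : ℝ} (hR : 0 ≤ R) :
    Tendsto (fun t : ℝ => Real.log (1 + t * R) / t) atTop (𝓝 0) := by
  rcases eq_or_lt_of_le hR with h | h
  · simp [← h]
  · have h1 : Tendsto (fun t : ℝ => 1 + t * R) atTop atTop :=
      tendsto_atTop_add_const_left _ 1 (tendsto_id.atTop_mul_const h)
    have h2 : Tendsto (fun t : ℝ => Real.log (1 + t * R) / (1 + t * R)) atTop (𝓝 0) :=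
      (Real.isLittleO_log_id_atTop.tendsto_div_nhds_zero).comp h1
    have h3 : Tendsto (fun t : ℝ => (1 + t * R) / t) atTop (𝓝 R) := by
      have he : (fun t : ℝ => (1 + t * R) / t) =ᶠ[atTop] fun t => 1 / t + R := by
        filter_upwards [eventually_gt_atTop (0:ℝ)] with t ht
        field_simp
      rw [tendsto_congr' he]
      have := (tendsto_one_div_atTop_nhds_zero_nat : Tendsto (fun n : ℕ => 1 / (n : ℝ)) atTop (𝓝 0))
      simpa using (tendsto_inv_atTop_zero).add (tendsto_const_nhds (x := R))
    have h4 := h2.mul h3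
    rw [zero_mul] at h4
    refine h4.congr' ?_
    filter_upwards [eventually_gt_atTop (0:ℝ)] with t ht
    have hpos : (0:ℝ) < 1 + t * R := by nlinarith
    field_simp

end Stmt4Aux



set_option synthInstance.maxHeartbeats 1000000 in
set_option maxHeartbeats 1000000 in
/-- any normed subspace `V` with `Ŝ₀(K) ⊆ V ⊆ Ŝ_N(K)` is regular. -/
theorem stmt4 (n N : ℕ) (hn : 1 ≤ n) (K : Finset (EuclideanSpace ℂ (Fin n))) (hK : K.Nonempty)
    (V : Submodule ℂ (EuclideanSpace ℂ (Fin n) → ℂ))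
    (hV : ∀ f ∈ V, IsQuasiPolyDeg K N f)
    (hV0 : ∀ c : EuclideanSpace ℂ (Fin n) → ℂ,
      (fun z => ∑ ξ ∈ K, c ξ * Complex.exp (pair ξ z)) ∈ V)
    (nrm : V → ℝ) (hnrm : IsNormOn V nrm) :
    IsRegularFor K hK (unitBall V nrm) := by
  classical
  obtain ⟨hzero, hsmul, hadd⟩ := hnrm
  have hnn : ∀ g : V, 0 ≤ nrm g := by
    intro g
    have h0 : nrm (0 : V) = 0 := (hzero 0).mpr rfl
    have hneg : nrm (-g) = nrm g := by
      have h := hsmul (-1) g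
      rw [show ((-1 : ℂ) • g) = -g from neg_one_smul ℂ g] at h
      simpa using h
    have h2 := hadd g (-g)
    rw [add_neg_cancel, h0, hneg] at h2
    linarith
  -- finite dimensionality of V
  set Φ : ({x // x ∈ K} × (Fin n → Fin (N + 1))) → (EuclideanSpace ℂ (Fin n) → ℂ) :=
    fun q => fun z => (∏ j, z j ^ (q.2 j : ℕ)) * Complex.exp (pair q.1.1 z) with hΦ
  have hVle : V ≤ Submodule.span ℂ (Set.range Φ) := by
    intro f hf
    obtain ⟨p, hdeg, hfp⟩ := hV f hf
    have key : f = ∑ ξ ∈ K, ∑ α ∈ (p ξ).support,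
        (fun z => (p ξ).coeff α * ((∏ j, z j ^ α j) * Complex.exp (pair ξ z))) := by
      funext z
      rw [hfp z]
      simp only [Finset.sum_apply]
      refine Finset.sum_congr rfl fun ξ _ => ?_
      rw [MvPolynomial.eval_eq', Finset.sum_mul]
      exact Finset.sum_congr rfl fun α _ => mul_assoc _ _ _
    rw [key]
    refine Submodule.sum_mem _ fun ξ hξ => Submodule.sum_mem _ fun α hα => ?_
    have hαle : ∀ j, α j < N + 1 := by
      intro j
      have h1 : α j ≤ α.sum fun _ e => e := by
        by_cases hj : j ∈ α.support
        · rw [Finsupp.sum]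
          exact Finset.single_le_sum (f := fun i => α i) (fun i _ => Nat.zero_le _) hj
        · simp [Finsupp.notMem_support_iff.mp hj]
      have h2 := (MvPolynomial.le_totalDegree hα).trans (hdeg ξ)
      omega
    have heq : (fun z : EuclideanSpace ℂ (Fin n) =>
          (p ξ).coeff α * ((∏ j, z j ^ α j) * Complex.exp (pair ξ z)))
        = (p ξ).coeff α • Φ (⟨ξ, hξ⟩, fun j => ⟨α j, hαle j⟩) := by
      funext z
      simp [hΦ, smul_eq_mul]
    rw [heq]
    exact Submodule.smul_mem _ _ (Submodule.subset_span ⟨_, rfl⟩)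
  haveI hfdspan : FiniteDimensional ℂ (Submodule.span ℂ (Set.range Φ)) :=
    FiniteDimensional.span_of_finite ℂ (Set.finite_range Φ)
  haveI hfd : FiniteDimensional ℂ V := Submodule.finiteDimensional_of_le hVle
  -- linear functionals are bounded for nrm
  have coordBound : ∀ l : V →ₗ[ℂ] ℂ, ∃ C : ℝ, 0 ≤ C ∧
      ∀ g : V, ‖l g‖ ≤ C * nrm g := by
    intro l
    letI ng : NormedAddCommGroup V := AddGroupNorm.toNormedAddCommGroup
      { toFun := nrm
        map_zero' := (hzero 0).mpr rfl
        add_le' := hadd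
        neg' := fun g => by
          have h := hsmul (-1) g
          rw [show ((-1 : ℂ) • g) = -g from neg_one_smul ℂ g] at h
          simpa using h
        eq_zero_of_map_eq_zero' := fun g h => (hzero g).mp h }
    letI : NormedSpace ℂ V :=
      { norm_smul_le := fun a g => by
          show nrm (a • g) ≤ ‖a‖ * nrm g
          rw [hsmul] }
    letI mV : MetricSpace ↥V := ng.toMetricSpace
    letI uV : UniformSpace ↥V := mV.toPseudoMetricSpace.toUniformSpace
    letI tV : TopologicalSpace ↥V := uV.toTopologicalSpace
    let lc : V →L[ℂ] ℂ := LinearMap.toContinuousLinearMap l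
    refine ⟨‖lc‖, norm_nonneg _, fun g => ?_⟩
    have hle := lc.le_opNorm g
    have h1 : ‖lc g‖ = ‖l g‖ := rfl
    have h2 : ‖g‖ = nrm g := rfl
    rw [h1, h2] at hle
    exact hle
  let b := Module.finBasis ℂ V
  have hcb : ∀ i, ∃ C, 0 ≤ C ∧ ∀ g : V, ‖b.repr g i‖ ≤ C * nrm g :=
    fun i => coordBound (b.coord i)
  choose C hC0 hCb using hcb
  have hbq : ∀ i, ∃ D, 0 ≤ D ∧ ∀ w,
      ‖(b i : EuclideanSpace ℂ (Fin n) → ℂ) w‖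
        ≤ D * (1 + ‖w‖) ^ N * Real.exp (suppFn K hK w) :=
    fun i => Stmt4Aux.qp_bound N K hK _ (hV _ (b i).2)
  choose D hD0 hDb using hbq
  set A : ℝ := 1 + ∑ i, C i * D i with hAdef
  have hA1 : (1 : ℝ) ≤ A := by
    have : (0:ℝ) ≤ ∑ i, C i * D i := Finset.sum_nonneg fun i _ => mul_nonneg (hC0 i) (hD0 i)
    rw [hAdef]; linarith
  have hball : ∀ g : V, nrm g ≤ 1 → ∀ w,
      ‖(g : EuclideanSpace ℂ (Fin n) → ℂ) w‖
        ≤ A * ((1 + ‖w‖) ^ N * Real.exp (suppFn K hK w)) := by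
    intro g hg w
    have hrepr : (g : EuclideanSpace ℂ (Fin n) → ℂ) w
        = ∑ i, b.repr g i * (b i : EuclideanSpace ℂ (Fin n) → ℂ) w := by
      conv_lhs => rw [← b.sum_repr g]
      push_cast
      simp
    rw [hrepr]
    have hpe : (0:ℝ) ≤ (1 + ‖w‖) ^ N * Real.exp (suppFn K hK w) := by positivity
    calc ‖∑ i, b.repr g i * (b i : EuclideanSpace ℂ (Fin n) → ℂ) w‖
        ≤ ∑ i, ‖b.repr g i‖
            * ‖(b i : EuclideanSpace ℂ (Fin n) → ℂ) w‖ := by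
          refine (norm_sum_le _ _).trans ?_
          simp [norm_mul]
      _ ≤ ∑ i, C i * (D i * ((1 + ‖w‖) ^ N * Real.exp (suppFn K hK w))) := by
          refine Finset.sum_le_sum fun i _ => ?_
          have h1 : ‖b.repr g i‖ ≤ C i := by
            have := hCb i g
            nlinarith [hnn g, hC0 i]
          have h2 : ‖(b i : EuclideanSpace ℂ (Fin n) → ℂ) w‖
              ≤ D i * ((1 + ‖w‖) ^ N * Real.exp (suppFn K hK w)) :=
            (hDb i w).trans_eq (by ring)
          exact mul_le_mul h1 h2 (norm_nonneg _) (hC0 i)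
      _ = (∑ i, C i * D i) * ((1 + ‖w‖) ^ N * Real.exp (suppFn K hK w)) := by
          rw [Finset.sum_mul]
          exact Finset.sum_congr rfl fun i _ => by ring
      _ ≤ A * ((1 + ‖w‖) ^ N * Real.exp (suppFn K hK w)) := by
          have hAge : (∑ i, C i * D i) ≤ A := by rw [hAdef]; linarith
          exact mul_le_mul_of_nonneg_right hAge hpe
  -- exponentials belong to V
  have hexp : ∀ ξ ∈ K, (fun z => Complex.exp (pair ξ z)) ∈ V := by
    intro ξ hξ
    have h := hV0 (fun η => if η = ξ then 1 else 0)
    have he : (fun z => ∑ η ∈ K, (if η = ξ then (1:ℂ) else 0) * Complex.exp (pair η z))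
        = fun z => Complex.exp (pair ξ z) := by
      funext z
      simp only [ite_mul, one_mul, zero_mul]
      rw [Finset.sum_ite_eq' K ξ fun η => Complex.exp (pair η z), if_pos hξ]
    rwa [he] at h
  set eV : {x // x ∈ K} → V := fun ξ => ⟨fun z => Complex.exp (pair ξ.1 z), hexp ξ.1 ξ.2⟩
    with heVdef
  have heV0 : ∀ ξ, 0 < nrm (eV ξ) := by
    intro ξ
    rcases (hnn (eV ξ)).lt_or_eq with h | h
    · exact h
    · exfalso
      have h0 : eV ξ = 0 := (hzero _).mp h.symm
      have h1 : (eV ξ : EuclideanSpace ℂ (Fin n) → ℂ) 0 = 0 := by rw [h0]; rfl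
      rw [heVdef] at h1
      simp only [Stmt4Aux.pair_zero, Complex.exp_zero] at h1
      exact one_ne_zero h1
  set c : ℝ := K.attach.sup' (Finset.attach_nonempty_iff.mpr hK) fun ξ => nrm (eV ξ) with hcdef
  have hc0 : 0 < c := by
    obtain ⟨ξ0, hξ0⟩ := hK
    exact (heV0 ⟨ξ0, hξ0⟩).trans_le
      (Finset.le_sup' (fun ξ => nrm (eV ξ)) (Finset.mem_attach _ ⟨ξ0, hξ0⟩))
  -- the main estimate
  intro S hS
  obtain ⟨R0, hR0⟩ := isBounded_iff_forall_norm_le.mp hS.isBounded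
  set R : ℝ := max R0 0 with hRdef
  have hR : 0 ≤ R := le_max_right _ _
  have hRz : ∀ z ∈ S, ‖z‖ ≤ R := fun z hz => (hR0 z hz).trans (le_max_left _ _)
  set G : ℝ → ℝ :=
    fun t => |Real.log c| / t + (Real.log A + N * Real.log (1 + t * R)) / t with hGdef
  have hGto : Tendsto G atTop (𝓝 0) := by
    have g1 : Tendsto (fun t : ℝ => |Real.log c| / t) atTop (𝓝 0) :=
      tendsto_const_nhds.div_atTop tendsto_id
    have g2 : Tendsto (fun t : ℝ => Real.log A / t) atTop (𝓝 0) :=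
      tendsto_const_nhds.div_atTop tendsto_id
    have g3 : Tendsto (fun t : ℝ => (N : ℝ) * (Real.log (1 + t * R) / t)) atTop (𝓝 0) := by
      simpa using (Stmt4Aux.log_lin_div hR).const_mul (N : ℝ)
    have heq : G = fun t => |Real.log c| / t
        + (Real.log A / t + (N : ℝ) * (Real.log (1 + t * R) / t)) := by
      funext t
      rw [hGdef]
      ring
    rw [heq]
    simpa using g1.add (g2.add g3)
  rw [Metric.tendstoUniformlyOn_iff]
  intro ε hε
  filter_upwards [Metric.tendsto_nhds.mp hGto ε hε, eventually_ge_atTop (1 : ℝ)] with t hGt ht1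
  intro z hz
  have ht0 : (0 : ℝ) < t := lt_of_lt_of_le one_pos ht1
  have htR : (0 : ℝ) < 1 + t * R := by nlinarith [mul_nonneg ht0.le hR]
  set h := suppFn K hK z with hh
  set Mset := (fun f => ‖f (t • z)‖) '' unitBall V nrm with hMset
  obtain ⟨ξs, hξs, hsup⟩ := Finset.exists_mem_eq_sup' hK fun ξ => (pair ξ z).re
  set gs : V := ((c⁻¹ : ℝ) : ℂ) • eV ⟨ξs, hξs⟩ with hgs
  have hgs1 : nrm gs ≤ 1 := by
    rw [hgs, hsmul, Complex.norm_real, Real.norm_eq_abs, abs_of_pos (inv_pos.mpr hc0)]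
    have hle : nrm (eV ⟨ξs, hξs⟩) ≤ c :=
      Finset.le_sup' (fun ξ => nrm (eV ξ)) (Finset.mem_attach _ ⟨ξs, hξs⟩)
    rw [inv_mul_le_one₀ hc0]
    exact hle
  have hmem : ‖(gs : EuclideanSpace ℂ (Fin n) → ℂ) (t • z)‖ ∈ Mset :=
    ⟨_, ⟨gs, hgs1, rfl⟩, rfl⟩
  have hgsval : ‖(gs : EuclideanSpace ℂ (Fin n) → ℂ) (t • z)‖
      = c⁻¹ * Real.exp (t * h) := by
    rw [hgs]
    simp only [Submodule.coe_smul, Pi.smul_apply, smul_eq_mul, heVdef]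
    have hsup' : h = (pair ξs z).re := hsup
    rw [norm_mul, Complex.norm_real, Real.norm_eq_abs, abs_of_pos (inv_pos.mpr hc0), Complex.norm_exp,
      Stmt4Aux.pair_smul, Complex.re_ofReal_mul, hsup']
  have hub : ∀ y ∈ Mset, y ≤ A * ((1 + t * R) ^ N * Real.exp (t * h)) := by
    rintro y ⟨f, ⟨g, hg1, rfl⟩, rfl⟩
    have h1 := hball g hg1 (t • z)
    rw [Stmt4Aux.suppFn_smul K hK ht0.le z, ← hh] at h1
    refine h1.trans ?_
    have h3 : ‖t • z‖ ≤ t * R := by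
      rw [norm_smul, Real.norm_eq_abs, abs_of_pos ht0]
      exact mul_le_mul_of_nonneg_left (hRz z hz) ht0.le
    have h4 : (1 + ‖t • z‖) ^ N ≤ (1 + t * R) ^ N :=
      pow_le_pow_left₀ (by positivity) (by linarith) N
    have h5 : (0:ℝ) ≤ Real.exp (t * h) := Real.exp_nonneg _
    exact mul_le_mul_of_nonneg_left (mul_le_mul_of_nonneg_right h4 h5) (by linarith)
  have hbdd : BddAbove Mset := ⟨_, hub⟩
  set M := sSup Mset with hM
  have hMlb : c⁻¹ * Real.exp (t * h) ≤ M := by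
    rw [← hgsval]
    exact le_csSup hbdd hmem
  have hMpos : 0 < M := lt_of_lt_of_le (by positivity) hMlb
  have hMub : M ≤ A * ((1 + t * R) ^ N * Real.exp (t * h)) := csSup_le ⟨_, hmem⟩ hub
  have hl1 : t * h - Real.log c ≤ Real.log M := by
    have hlog := Real.log_le_log (by positivity) hMlb
    rw [Real.log_mul (by positivity) (Real.exp_ne_zero _), Real.log_inv, Real.log_exp] at hlog
    linarith
  have hl2 : Real.log M ≤ Real.log A + N * Real.log (1 + t * R) + t * h := by
    have hlog := Real.log_le_log hMpos hMub
    rw [Real.log_mul (by positivity) (by positivity),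
      Real.log_mul (by positivity) (Real.exp_ne_zero _), Real.log_pow, Real.log_exp] at hlog
    linarith
  have hla : 0 ≤ Real.log A := Real.log_nonneg hA1
  have hlr : 0 ≤ Real.log (1 + t * R) := Real.log_nonneg (by nlinarith)
  rw [Real.dist_eq]
  have hb1 : 1 / t * Real.log M ≤ (Real.log A + N * Real.log (1 + t * R)) / t + h := by
    have := mul_le_mul_of_nonneg_left hl2 (le_of_lt (one_div_pos.mpr ht0))
    calc 1 / t * Real.log M
        ≤ 1 / t * (Real.log A + N * Real.log (1 + t * R) + t * h) := this
      _ = (Real.log A + N * Real.log (1 + t * R)) / t + h := by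
          field_simp
  have hb2 : h - |Real.log c| / t ≤ 1 / t * Real.log M := by
    have h1 := mul_le_mul_of_nonneg_left hl1 (le_of_lt (one_div_pos.mpr ht0))
    have h2 : 1 / t * (t * h - Real.log c) = h - Real.log c / t := by field_simp
    have h3 : Real.log c / t ≤ |Real.log c| / t := by
      gcongr
      exact le_abs_self _
    linarith [h1, h2 ▸ h1]
  have habs : |h - 1 / t * Real.log M| ≤ G t := by
    rw [abs_le, hGdef]
    have hd1 : 0 ≤ |Real.log c| / t := div_nonneg (abs_nonneg _) ht0.le
    have hd2 : 0 ≤ (Real.log A + N * Real.log (1 + t * R)) / t := by positivity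
    constructor
    · linarith [hb1]
    · linarith [hb2]
  calc |h - 1 / t * Real.log M| ≤ G t := habs
    _ ≤ |G t| := le_abs_self _
    _ < ε := by
        have := hGt
        rwa [Real.dist_eq, sub_zero] at this
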